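/- Let (C, E, s) be an n-exangulated category, F satisfying (M0) with F̄ satisfying (MR1)–(MR3), and Q : C → C̃ the localization at F. Suppose every distinguished n-exangle of C induces a weak kernel–cokernel sequence in C̃. Then for any Ẽ-extension [t \ δ / s] ∈ Ẽ(C, A) realized (via s(δ) = [X₀ → X₁ → ⋯ → X_{n+1}]) by the sequence A → X₁ → ⋯ → X_n → C in C̃ (with first map Q(x₀ ∘ s) and last map Q(t ∘ x_n)), the sequence of functors C̃(−, A) → C̃(−, X₁) → ⋯ → C̃(−, C) → Ẽ(−, A) is exact, where the last map is pullback of [t \ δ / s]. -/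

import Mathlib

open CategoryTheory CategoryTheory.Limits ZeroObject

universe v u

variable {C : Type u} [Category.{v} C] [Preadditive C] [HasZeroObject C]
  [HasFiniteBiproducts C] [HasBinaryBiproducts C]

/-- An additive bifunctor `E : Cᵒᵖ × C ⥤ Ab`, given by its action on objects
(valued in abelian groups), pushforward along morphisms in the covariant (second)
variable and pullback along morphisms in the contravariant (first) variable. -/
structure AddBifunctor (C : Type u) [Category.{v} C] [Preadditive C] where
  E : C → C → AddCommGrpCat.{v}
  push : ∀ {Z X X' : C}, (X ⟶ X') → E Z X → E Z X'
  pull : ∀ {Z' Z X : C}, (Z' ⟶ Z) → E Z X → E Z' X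
  push_id : ∀ {Z X : C} (δ : E Z X), push (𝟙 X) δ = δ
  push_comp : ∀ {Z X X' X'' : C} (f : X ⟶ X') (g : X' ⟶ X'') (δ : E Z X),
      push (f ≫ g) δ = push g (push f δ)
  pull_id : ∀ {Z X : C} (δ : E Z X), pull (𝟙 Z) δ = δ
  pull_comp : ∀ {Z'' Z' Z X : C} (g : Z'' ⟶ Z') (f : Z' ⟶ Z) (δ : E Z X),
      pull (g ≫ f) δ = pull g (pull f δ)
  pull_push : ∀ {Z' Z X X' : C} (c : Z' ⟶ Z) (a : X ⟶ X') (δ : E Z X),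
      pull c (push a δ) = push a (pull c δ)
  push_add : ∀ {Z X X' : C} (a : X ⟶ X') (δ δ' : E Z X),
      push a (δ + δ') = push a δ + push a δ'
  pull_add : ∀ {Z' Z X : C} (c : Z' ⟶ Z) (δ δ' : E Z X),
      pull c (δ + δ') = pull c δ + pull c δ'
  push_add_hom : ∀ {Z X X' : C} (a a' : X ⟶ X') (δ : E Z X),
      push (a + a') δ = push a δ + push a' δ
  pull_add_hom : ∀ {Z' Z X : C} (c c' : Z' ⟶ Z) (δ : E Z X),
      pull (c + c') δ = pull c δ + pull c' δ

/-- A skeleton of the notion of a (weakly) `n`-exangulated category of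
Herschend–Liu–Nakaoka: an additive bifunctor `E` together with a class of
distinguished `n`-exangles `⟨X•, δ⟩` (an `(n+2)`-term complex together with an
extension `δ ∈ E(X_{n+1}, X₀)`), subject to realization, exactness (C1) and
lifting (C3)/(C3') axioms. -/
structure NExangulated (C : Type u) [Category.{v} C] [Preadditive C]
    [HasZeroObject C] [HasFiniteBiproducts C] (n : ℕ) extends AddBifunctor C where
  distinguished : ∀ (X : ComposableArrows C (n + 1)),
      (E (X.obj' (n + 1)) (X.obj' 0) : Type v) → Prop
  realize : ∀ (A B : C) (δ : E B A), ∃ (X : ComposableArrows C (n + 1))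
      (hA : X.obj' 0 = A) (hB : X.obj' (n + 1) = B),
      distinguished X (pull (eqToHom hB) (push (eqToHom hA.symm) δ))
  isComplex : ∀ (X : ComposableArrows C (n + 1)) (δ : E (X.obj' (n + 1)) (X.obj' 0)),
      distinguished X δ → ∀ (i : ℕ) (hi : i + 2 ≤ n + 1),
      X.map' i (i + 1) ≫ X.map' (i + 1) (i + 2) = 0
  push_d0 : ∀ (X : ComposableArrows C (n + 1)) (δ : E (X.obj' (n + 1)) (X.obj' 0)),
      distinguished X δ → push (X.map' 0 1) δ = 0
  pull_dn : ∀ (X : ComposableArrows C (n + 1)) (δ : E (X.obj' (n + 1)) (X.obj' 0)),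
      distinguished X δ → pull (X.map' n (n + 1)) δ = 0
  exact_contra_mid : ∀ (X : ComposableArrows C (n + 1)) (δ : E (X.obj' (n + 1)) (X.obj' 0)),
      distinguished X δ → ∀ (i : ℕ) (hi : i + 2 ≤ n + 1) (Y : C)
      (g : Y ⟶ X.obj' (i + 1)), g ≫ X.map' (i + 1) (i + 2) = 0 →
      ∃ h : Y ⟶ X.obj' i, h ≫ X.map' i (i + 1) = g
  exact_contra_last : ∀ (X : ComposableArrows C (n + 1)) (δ : E (X.obj' (n + 1)) (X.obj' 0)),
      distinguished X δ → ∀ (Y : C) (g : Y ⟶ X.obj' (n + 1)), pull g δ = 0 →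
      ∃ h : Y ⟶ X.obj' n, h ≫ X.map' n (n + 1) = g
  exact_cov_mid : ∀ (X : ComposableArrows C (n + 1)) (δ : E (X.obj' (n + 1)) (X.obj' 0)),
      distinguished X δ → ∀ (i : ℕ) (hi : i + 2 ≤ n + 1) (Y : C)
      (g : X.obj' (i + 1) ⟶ Y), X.map' i (i + 1) ≫ g = 0 →
      ∃ h : X.obj' (i + 2) ⟶ Y, X.map' (i + 1) (i + 2) ≫ h = g
  exact_cov_first : ∀ (X : ComposableArrows C (n + 1)) (δ : E (X.obj' (n + 1)) (X.obj' 0)),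
      distinguished X δ → ∀ (Y : C) (g : X.obj' 0 ⟶ Y), push g δ = 0 →
      ∃ h : X.obj' 1 ⟶ Y, X.map' 0 1 ≫ h = g
  pushLift : ∀ (X : ComposableArrows C (n + 1)) (δ : E (X.obj' (n + 1)) (X.obj' 0))
      (Y : ComposableArrows C (n + 1)) (ρ : E (Y.obj' (n + 1)) (Y.obj' 0)),
      distinguished X δ → distinguished Y ρ →
      ∀ (a : X.obj' 0 ⟶ Y.obj' 0) (hC : X.obj' (n + 1) = Y.obj' (n + 1)),
      push a δ = pull (eqToHom hC) ρ →
      ∃ f : X ⟶ Y, f.app ⟨0, by omega⟩ = a ∧ f.app ⟨n + 1, by omega⟩ = eqToHom hC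
  pullLift : ∀ (X : ComposableArrows C (n + 1)) (δ : E (X.obj' (n + 1)) (X.obj' 0))
      (Y : ComposableArrows C (n + 1)) (ρ : E (Y.obj' (n + 1)) (Y.obj' 0)),
      distinguished X δ → distinguished Y ρ →
      ∀ (c : X.obj' (n + 1) ⟶ Y.obj' (n + 1)) (hA : X.obj' 0 = Y.obj' 0),
      push (eqToHom hA) δ = pull c ρ →
      ∃ f : X ⟶ Y, f.app ⟨0, by omega⟩ = eqToHom hA ∧ f.app ⟨n + 1, by omega⟩ = c

/-- A morphism factors through an object of the class `N`. -/
def FactorsThrough (N : Set C) {X Y : C} (f : X ⟶ Y) : Prop :=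
  ∃ Z ∈ N, ∃ (u : X ⟶ Z) (v : Z ⟶ Y), f = u ≫ v

/-- The hom relation identifying two morphisms whose difference lies in the
ideal `[N]` of morphisms factoring through an object of `N`. -/
def idealRel (N : Set C) : HomRel C := fun _ _ f g => FactorsThrough N (f - g)

/-- The full subcategory `N_F` of objects `N` such that both `N ⟶ 0` and
`0 ⟶ N` belong to `F`. -/
def NF (F : MorphismProperty C) : Set C :=
  {N : C | F (0 : N ⟶ (0 : C)) ∧ F (0 : (0 : C) ⟶ N)}

/-- Condition (M0): `F` contains all isomorphisms, is closed under composition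
and closed under finite direct sums of morphisms. -/
def M0 (F : MorphismProperty C) : Prop :=
  (∀ {X Y : C} (f : X ⟶ Y), IsIso f → F f) ∧
  (∀ {X Y Z : C} (f : X ⟶ Y) (g : Y ⟶ Z), F f → F g → F (f ≫ g)) ∧
  (∀ {X₁ Y₁ X₂ Y₂ : C} (f₁ : X₁ ⟶ Y₁) (f₂ : X₂ ⟶ Y₂), F f₁ → F f₂ →
    F (biprod.map f₁ f₂))

/-- The class `F̄` of morphisms of the ideal quotient `C/[N_F]` obtained from
the image of `F` by closing under pre- and post-composition with isomorphisms. -/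
def Fbar (F : MorphismProperty C) :
    MorphismProperty (CategoryTheory.Quotient (idealRel (NF F))) :=
  fun X Y h => ∃ (A B : C)
    (e₁ : X ⟶ (CategoryTheory.Quotient.functor (idealRel (NF F))).obj A)
    (e₂ : (CategoryTheory.Quotient.functor (idealRel (NF F))).obj B ⟶ Y)
    (f : A ⟶ B), IsIso e₁ ∧ IsIso e₂ ∧ F f ∧
      h = e₁ ≫ (CategoryTheory.Quotient.functor (idealRel (NF F))).map f ≫ e₂

/-- 2-out-of-3 property for a class of morphisms. -/
def TwoOutOfThree {D : Type*} [Category D] (S : MorphismProperty D) : Prop :=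
  (∀ {X Y Z : D} (f : X ⟶ Y) (g : Y ⟶ Z), S f → S g → S (f ≫ g)) ∧
  (∀ {X Y Z : D} (f : X ⟶ Y) (g : Y ⟶ Z), S f → S (f ≫ g) → S g) ∧
  (∀ {X Y Z : D} (f : X ⟶ Y) (g : Y ⟶ Z), S g → S (f ≫ g) → S f)

/-- The ideal quotient functor `p : C ⥤ C/[N_F]`. -/
abbrev pFunctor (F : MorphismProperty C) :
    C ⥤ CategoryTheory.Quotient (idealRel (NF F)) :=
  CategoryTheory.Quotient.functor (idealRel (NF F))

/-- `f` is an inflation: it appears as the 0-th differential of some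
distinguished `n`-exangle. -/
def NExangulated.Inflation {n : ℕ} (T : NExangulated C n) {A B : C}
    (f : A ⟶ B) : Prop :=
  ∃ (X : ComposableArrows C (n + 1)) (δ : T.E (X.obj' (n + 1)) (X.obj' 0)),
    T.distinguished X δ ∧ ∃ (hA : X.obj' 0 = A) (hB : X.obj' 1 = B),
      X.map' 0 1 = eqToHom hA ≫ f ≫ eqToHom hB.symm

/-- `f` is a deflation: it appears as the `n`-th differential of some
distinguished `n`-exangle. -/
def NExangulated.Deflation {n : ℕ} (T : NExangulated C n) {A B : C}
    (f : A ⟶ B) : Prop :=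
  ∃ (X : ComposableArrows C (n + 1)) (δ : T.E (X.obj' (n + 1)) (X.obj' 0)),
    T.distinguished X δ ∧ ∃ (hA : X.obj' n = A) (hB : X.obj' (n + 1) = B),
      X.map' n (n + 1) = eqToHom hA ≫ f ≫ eqToHom hB.symm

/-- The WIC condition: if `g ∘ f` is a deflation then so is `g`; if `g ∘ f` is
an inflation then so is `f`. -/
def WIC {n : ℕ} (T : NExangulated C n) : Prop :=
  (∀ {A B C' : C} (f : A ⟶ B) (g : B ⟶ C'), T.Deflation (f ≫ g) → T.Deflation g) ∧
  (∀ {A B C' : C} (f : A ⟶ B) (g : B ⟶ C'), T.Inflation (f ≫ g) → T.Inflation f)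

/-- Condition (MR3): given a morphism `(a, c)` of extensions between
distinguished `n`-exangles whose images in `C/[N_F]` lie in `F̄`, there exist
middle components `bᵢ ∈ F̄` making all squares commute in `C/[N_F]`. -/
def MR3 {n : ℕ} (T : NExangulated C n) (F : MorphismProperty C) : Prop :=
  ∀ (X : ComposableArrows C (n + 1)) (δ : T.E (X.obj' (n + 1)) (X.obj' 0))
    (Y : ComposableArrows C (n + 1)) (ρ : T.E (Y.obj' (n + 1)) (Y.obj' 0)),
    T.distinguished X δ → T.distinguished Y ρ →
    ∀ (a : X.obj' 0 ⟶ Y.obj' 0) (c : X.obj' (n + 1) ⟶ Y.obj' (n + 1)),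
    T.push a δ = T.pull c ρ →
    Fbar F ((pFunctor F).map a) → Fbar F ((pFunctor F).map c) →
    ∃ b : ∀ (i : ℕ) (hi : i ≤ n + 1),
        ((pFunctor F).obj (X.obj' i hi) ⟶ (pFunctor F).obj (Y.obj' i hi)),
      b 0 (by omega) = (pFunctor F).map a ∧
      b (n + 1) (by omega) = (pFunctor F).map c ∧
      (∀ (i : ℕ) (h1 : 1 ≤ i) (h2 : i ≤ n), Fbar F (b i (by omega))) ∧
      (∀ (i : ℕ) (hi : i + 1 ≤ n + 1),
        (pFunctor F).map (X.map' i (i + 1)) ≫ b (i + 1) hi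
          = b i (by omega) ≫ (pFunctor F).map (Y.map' i (i + 1)))

/-- The subfunctor `K ⊆ E` of extensions killed by pushforward along some
morphism of `F`. -/
def Kext {n : ℕ} (T : NExangulated C n) (F : MorphismProperty C)
    {Z X : C} (δ : T.E Z X) : Prop :=
  ∃ (B : C) (s : X ⟶ B), F s ∧ T.push s δ = 0

/-- The localization functor `Q : C ⥤ C̃`, the composite of the ideal quotient
`p : C ⥤ C̄ = C/[N_F]` with the localization of `C̄` at the multiplicative
system `F̄`. -/
noncomputable abbrev LFun (F : MorphismProperty C) :
    C ⥤ (Fbar F).Localization :=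
  pFunctor F ⋙ (Fbar F).Q

lemma AddBifunctor.push_zero (T : AddBifunctor C) {Z X X' : C} (a : X ⟶ X') :
    T.push a (0 : T.E Z X) = 0 := by
  have := T.push_add a (0 : T.E Z X) 0
  rw [add_zero] at this
  exact left_eq_add.mp this

lemma Fbar_of_F (F : MorphismProperty C) {A B : C} (f : A ⟶ B) (hF : F f) :
    Fbar F ((pFunctor F).map f) :=
  ⟨A, B, 𝟙 _, 𝟙 _, f, inferInstance, inferInstance, hF, by simp⟩

lemma LFun_isIso (F : MorphismProperty C) {A B : C} (f : A ⟶ B) (hF : F f) :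
    IsIso ((LFun F).map f) :=
  MorphismProperty.Q_inverts (Fbar F) _ (Fbar_of_F F f hF)

/-- Suppose that every distinguished `n`-exangle of `C` induces a weak
kernel–cokernel sequence in the localization `C̃`.  Then for every
`Ẽ`-extension `[t \ δ / s] ∈ Ẽ(C₀, A)` (where `s : A ⟶ X₀`, `t : X_{n+1} ⟶ C₀`
lie in `F` and `δ` is realized by the distinguished `n`-exangle `X`), the
realization `A → X₁ → ⋯ → X_n → C₀` of `[t \ δ / s]` in `C̃` yields an exact
sequence of functors
`C̃(−, A) → C̃(−, X₁) → ⋯ → C̃(−, X_n) → C̃(−, C₀) → Ẽ(−, A)`,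
where exactness at `C̃(−, C₀)` is expressed via the vanishing of the pullback
of `[t \ δ / s]` (written out in terms of fractions and the subfunctor `K`). -/
theorem localized_realization_exact {n : ℕ} (hn : 0 < n)
    (T : NExangulated C n) (hWIC : WIC T)
    (F : MorphismProperty C) (hM0 : M0 F)
    (hMR1 : TwoOutOfThree (Fbar F))
    [(Fbar F).HasLeftCalculusOfFractions] [(Fbar F).HasRightCalculusOfFractions]
    (hMR3 : MR3 T F)
    [Preadditive (CategoryTheory.Quotient (idealRel (NF F)))]
    (hWK : ∀ (X : ComposableArrows C (n + 1)) (δ : T.E (X.obj' (n + 1)) (X.obj' 0)),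
      T.distinguished X δ →
      (∀ (i : ℕ) (hi : i + 2 ≤ n + 1) (P : C)
        (β : (LFun F).obj P ⟶ (LFun F).obj (X.obj' (i + 1))),
        β ≫ (LFun F).map (X.map' (i + 1) (i + 2)) = 0 →
        ∃ h : (LFun F).obj P ⟶ (LFun F).obj (X.obj' i),
          h ≫ (LFun F).map (X.map' i (i + 1)) = β) ∧
      (∀ (i : ℕ) (hi : i + 2 ≤ n + 1) (P : C)
        (γ : (LFun F).obj (X.obj' (i + 1)) ⟶ (LFun F).obj P),
        (LFun F).map (X.map' i (i + 1)) ≫ γ = 0 →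
        ∃ h : (LFun F).obj (X.obj' (i + 2)) ⟶ (LFun F).obj P,
          (LFun F).map (X.map' (i + 1) (i + 2)) ≫ h = γ))
    (X : ComposableArrows C (n + 1)) (δ : T.E (X.obj' (n + 1)) (X.obj' 0))
    (hX : T.distinguished X δ)
    (A C₀ : C) (s : A ⟶ X.obj' 0) (hs : F s)
    (t : X.obj' (n + 1) ⟶ C₀) (ht : F t) :
    (∀ (P : C) (β : (LFun F).obj P ⟶ (LFun F).obj (X.obj' 1)),
      β ≫ (LFun F).map (X.map' 1 2 (by omega) (by omega)) = 0 →
      ∃ h : (LFun F).obj P ⟶ (LFun F).obj A,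
        h ≫ (LFun F).map (s ≫ X.map' 0 1) = β) ∧
    (∀ (i : ℕ) (h1 : 1 ≤ i) (hi : i + 2 ≤ n + 1) (P : C)
      (β : (LFun F).obj P ⟶ (LFun F).obj (X.obj' (i + 1))),
      β ≫ (LFun F).map (X.map' (i + 1) (i + 2)) = 0 →
      ∃ h : (LFun F).obj P ⟶ (LFun F).obj (X.obj' i),
        h ≫ (LFun F).map (X.map' i (i + 1)) = β) ∧
    (∀ (P : C) (β : (LFun F).obj P ⟶ (LFun F).obj C₀),
      (∃ (P' : C) (g : P' ⟶ P) (f : P' ⟶ X.obj' (n + 1)), F g ∧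
        (LFun F).map g ≫ β = (LFun F).map (f ≫ t) ∧
        ∃ (P'' : C) (m : P'' ⟶ P'), F m ∧
          ∃ (B : C) (u : X.obj' 0 ⟶ B), F u ∧ T.push u (T.pull (m ≫ f) δ) = 0) →
      ∃ h : (LFun F).obj P ⟶ (LFun F).obj (X.obj' n),
        h ≫ (LFun F).map (X.map' n (n + 1) ≫ t) = β) := by
  obtain ⟨hWKc, hWKv⟩ := hWK X δ hX
  refine ⟨?_, ?_, ?_⟩
  · intro P β hβ
    obtain ⟨h, hh⟩ := hWKc 0 (by omega) P β hβ
    have hso : IsIso ((LFun F).map s) := LFun_isIso F s hs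
    refine ⟨h ≫ inv ((LFun F).map s), ?_⟩
    rw [CategoryTheory.Functor.map_comp, Category.assoc, IsIso.inv_hom_id_assoc]
    exact hh
  · intro i h1 hi P β hβ
    exact hWKc i hi P β hβ
  · rintro P β ⟨P', g, f, hg, hβ, P'', m, hm, B, u, hu, hK⟩
    obtain ⟨Z, hB', hC', hZ⟩ := T.realize B (X.obj' (n + 1)) (T.push u δ)
    have hpull0 : T.pull ((m ≫ f) ≫ eqToHom hC'.symm)
        (T.pull (eqToHom hC') (T.push (eqToHom hB'.symm) (T.push u δ))) = 0 := by
      rw [← T.pull_comp, Category.assoc, eqToHom_trans, eqToHom_refl, Category.comp_id,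
        ← T.push_comp, T.pull_push, T.push_comp, hK, AddBifunctor.push_zero]
    obtain ⟨h₀, hh₀⟩ := T.exact_contra_last Z _ hZ P'' ((m ≫ f) ≫ eqToHom hC'.symm) hpull0
    have hcomm : T.push (u ≫ eqToHom hB'.symm) δ
        = T.pull (eqToHom hC'.symm)
            (T.pull (eqToHom hC') (T.push (eqToHom hB'.symm) (T.push u δ))) := by
      rw [← T.pull_comp, eqToHom_trans, eqToHom_refl, T.pull_id, T.push_comp]
    have hFa : Fbar F ((pFunctor F).map (u ≫ eqToHom hB'.symm)) :=
      ⟨_, _, 𝟙 _, (pFunctor F).map (eqToHom hB'.symm), u, inferInstance, inferInstance, hu,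
        by rw [Category.id_comp]; exact (pFunctor F).map_comp _ _⟩
    have hFc : Fbar F ((pFunctor F).map (eqToHom hC'.symm)) :=
      ⟨_, _, 𝟙 _, (pFunctor F).map (eqToHom hC'.symm), 𝟙 _, inferInstance, inferInstance,
        hM0.1 _ inferInstance, by simp⟩
    obtain ⟨b, hb0, hbn1, hbF, hbsq⟩ := hMR3 X δ Z _ hX hZ _ _ hcomm hFa hFc
    have hnn : n ≤ n + 1 := by omega
    have hbnF : Fbar F (b n hnn) := hbF n hn (le_refl n)
    have hiso_bn : IsIso ((Fbar F).Q.map (b n hnn)) :=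
      MorphismProperty.Q_inverts (Fbar F) _ hbnF
    have hsq := hbsq n (by omega)
    rw [hbn1] at hsq
    have hgi : IsIso ((LFun F).map g) := LFun_isIso F g hg
    have hmi : IsIso ((LFun F).map m) := LFun_isIso F m hm
    refine ⟨inv ((LFun F).map g) ≫ inv ((LFun F).map m) ≫ (LFun F).map h₀ ≫
      inv ((Fbar F).Q.map (b n hnn)), ?_⟩
    -- key : bₙ⁻¹ ∘ L xₙ = L zₙ ∘ L (eqToHom hC')
    have hQsq : (LFun F).map (X.map' n (n + 1)) ≫ (LFun F).map (eqToHom hC'.symm) =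
        (Fbar F).Q.map (b n hnn) ≫ (LFun F).map (Z.map' n (n + 1)) := by
      have := congrArg (Fbar F).Q.map hsq
      simpa using this
    have hkey : inv ((Fbar F).Q.map (b n hnn)) ≫ (LFun F).map (X.map' n (n + 1)) =
        (LFun F).map (Z.map' n (n + 1)) ≫ (LFun F).map (eqToHom hC') := by
      rw [IsIso.inv_comp_eq, ← Category.assoc, ← hQsq, Category.assoc,
        ← CategoryTheory.Functor.map_comp, eqToHom_trans, eqToHom_refl, CategoryTheory.Functor.map_id, Category.comp_id]
    have hmf : (LFun F).map h₀ ≫ (LFun F).map (Z.map' n (n + 1)) ≫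
        (LFun F).map (eqToHom hC') = (LFun F).map m ≫ (LFun F).map f := by
      rw [← Category.assoc, ← CategoryTheory.Functor.map_comp, hh₀]
      rw [← CategoryTheory.Functor.map_comp, Category.assoc, eqToHom_trans, eqToHom_refl,
        Category.comp_id, CategoryTheory.Functor.map_comp]
    have hft : (LFun F).map f ≫ (LFun F).map t = (LFun F).map g ≫ β := by
      rw [← CategoryTheory.Functor.map_comp, ← hβ]
    simp only [Functor.comp_map] at hkey hmf hft
    simp only [CategoryTheory.Functor.map_comp, Functor.comp_map, Category.assoc]
    rw [reassoc_of% hkey, reassoc_of% hmf, IsIso.inv_hom_id_assoc, hft,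
      IsIso.inv_hom_id_assoc]
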